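/- For every even integer n ≥ 6, the function x_n is a modular function on Γ₀(2ⁿ): for every matrix (a b; c d) in SL₂(ℤ) with 2ⁿ ∣ c and every τ in the complex upper half-plane ℍ, x_n((aτ+b)/(cτ+d)) = x_n(τ). -/

import Mathlib

open Complex Filter Topology
open Real

/-- Jacobi theta function θ₂(τ) = ∑_{n∈ℤ} exp(πiτ(n+1/2)²). -/
noncomputable def θ₂ (τ : ℂ) : ℂ :=
  ∑' n : ℤ, Complex.exp (Real.pi * Complex.I * τ * ((n : ℂ) + 1/2)^2)

/-- Jacobi theta function θ₃(τ) = ∑_{n∈ℤ} exp(πiτn²). -/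
noncomputable def θ₃ (τ : ℂ) : ℂ :=
  ∑' n : ℤ, Complex.exp (Real.pi * Complex.I * τ * (n : ℂ)^2)

noncomputable def Th4 (τ : ℂ) : ℂ := jacobiTheta₂ (1/2) τ
noncomputable def Sfac (τ : ℂ) : ℂ := (-I * τ) ^ (1/2 : ℂ)

section helpers

lemma exp_pi_half : cexp (↑π * I / 2) = I := by
  rw [show (↑π * I / 2 : ℂ) = (↑(π/2) : ℂ) * I by push_cast; ring, exp_mul_I]
  push_cast [Real.cos_pi_div_two, Real.sin_pi_div_two]
  simp

lemma exp_I_zpow (k : ℤ) : cexp (↑π * I * k / 2) = I ^ k := by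
  rw [show (↑π * I * k / 2 : ℂ) = (k : ℂ) * (↑π * I / 2) by ring, Complex.exp_int_mul, exp_pi_half]

lemma I_zpow_of_four_dvd {m : ℤ} (h : (4:ℤ) ∣ m) : I ^ m = 1 := by
  obtain ⟨j, rfl⟩ := h
  rw [zpow_mul, show (I:ℂ) ^ (4:ℤ) = 1 by norm_num [zpow_ofNat], one_zpow]

lemma jt2_add_right_int (z τ : ℂ) (k : ℤ) : jacobiTheta₂ z (τ + 2*k) = jacobiTheta₂ z τ := by
  induction k using Int.induction_on with
  | zero => simp
  | succ n ih =>
    rw [show τ + 2*((n:ℤ)+1 : ℤ) = (τ + 2*(n:ℤ)) + 2 by push_cast; ring, jacobiTheta₂_add_right, ih]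
  | pred n ih =>
    have := jacobiTheta₂_add_right z (τ + 2*(-(n:ℤ)-1 : ℤ))
    rw [show (τ + 2*(-(n:ℤ)-1 : ℤ)) + 2 = τ + 2*(-(n:ℤ) : ℤ) by push_cast; ring, ih] at this
    exact this.symm ▸ this

lemma jt2_add_left_int (z τ : ℂ) (k : ℤ) : jacobiTheta₂ (z + k) τ = jacobiTheta₂ z τ := by
  induction k using Int.induction_on with
  | zero => simp
  | succ n ih =>
    rw [show z + ((n:ℤ)+1 : ℤ) = (z + (n:ℤ)) + 1 by push_cast; ring, jacobiTheta₂_add_left, ih]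
  | pred n ih =>
    have := jacobiTheta₂_add_left (z + (-(n:ℤ)-1 : ℤ)) τ
    rw [show (z + (-(n:ℤ)-1 : ℤ)) + 1 = z + (-(n:ℤ) : ℤ) by push_cast; ring, ih] at this
    exact this.symm ▸ this

lemma mobius_im (a b c d : ℝ) (τ : ℂ) :
    (((a:ℂ)*τ + b)/((c:ℂ)*τ + d)).im
      = (a*d - b*c) * τ.im / Complex.normSq ((c:ℂ)*τ + d) := by
  rw [Complex.div_im, ← sub_div]
  congr 1
  simp only [Complex.add_im, Complex.add_re, Complex.mul_im, Complex.mul_re,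
    Complex.ofReal_re, Complex.ofReal_im]
  ring

lemma tau_ne_zero {τ : ℂ} (hτ : 0 < τ.im) : τ ≠ 0 := by
  intro h; rw [h] at hτ; simp at hτ

lemma neg_inv_im {τ : ℂ} (hτ : 0 < τ.im) : 0 < (-1/τ).im := by
  rw [neg_div, neg_im, one_div, inv_im, neg_div, neg_neg]
  exact div_pos hτ (normSq_pos.mpr (tau_ne_zero hτ))

lemma denom_ne_zero {c d : ℤ} (h : ¬(c = 0 ∧ d = 0)) {τ : ℂ} (hτ : 0 < τ.im) :
    (c:ℂ)*τ + (d:ℂ) ≠ 0 := by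
  intro h0
  have him : (c:ℝ) * τ.im = 0 := by
    have := congrArg Complex.im h0
    simpa [Complex.add_im, Complex.mul_im] using this
  have hc : c = 0 := by
    rcases mul_eq_zero.mp him with h' | h'
    · exact_mod_cast h'
    · exact absurd h' hτ.ne'
  have hre := congrArg Complex.re h0
  rw [hc] at hre
  simp at hre
  exact h ⟨hc, by exact_mod_cast hre⟩

lemma mobius_pos {a b c d : ℤ} (hdet : a*d - b*c = 1) {τ : ℂ} (hτ : 0 < τ.im) :
    0 < (((a:ℂ)*τ + (b:ℂ))/((c:ℂ)*τ + (d:ℂ))).im := by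
  have hcd : ¬(c = 0 ∧ d = 0) := by rintro ⟨rfl, rfl⟩; simp at hdet
  have h := mobius_im (a:ℝ) (b:ℝ) (c:ℝ) (d:ℝ) τ
  have hden := denom_ne_zero hcd hτ
  rw [show (((a:ℝ)):ℂ) = (a:ℂ) by push_cast; ring, show (((b:ℝ)):ℂ) = (b:ℂ) by push_cast; ring,
    show (((c:ℝ)):ℂ) = (c:ℂ) by push_cast; ring, show (((d:ℝ)):ℂ) = (d:ℂ) by push_cast; ring] at h
  rw [h, show ((a:ℝ)*d - b*c) = 1 by exact_mod_cast hdet, one_mul]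
  exact div_pos hτ (normSq_pos.mpr hden)


lemma div_step (x y : ℤ) (hy : y ≠ 0) (hpar : (x + y) % 2 = 1) :
    ∃ k r : ℤ, x = 2*y*k + r ∧ r.natAbs < y.natAbs := by
  rcases lt_or_gt_of_ne hy with hneg | hpos
  · -- reduce to positive case
    have hpos' : -y > 0 := by omega
    have hpar' : (x + -y) % 2 = 1 := by omega
    -- inline positive construction for -y
    obtain ⟨k, r, h1, h2⟩ : ∃ k r : ℤ, x = 2*(-y)*k + r ∧ r.natAbs < (-y).natAbs := by
      have h1 := Int.mul_ediv_add_emod x (2*(-y))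
      have h2 := Int.emod_nonneg x (by omega : (2*(-y)) ≠ 0)
      have h3 := Int.emod_lt_of_pos x (by omega : 0 < 2*(-y))
      have heven : ∃ m, 2*(-y)*(x/(2*(-y))) = 2*m := ⟨(-y)*(x/(2*(-y))), by ring⟩
      obtain ⟨m, hm⟩ := heven
      by_cases hr : x % (2*(-y)) < -y
      · exact ⟨x/(2*(-y)), x % (2*(-y)), by linear_combination h1.symm, by omega⟩
      · refine ⟨x/(2*(-y)) + 1, x % (2*(-y)) - 2*(-y), by linear_combination h1.symm, ?_⟩
        omega
    exact ⟨-k, r, by linear_combination h1, by omega⟩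
  · obtain ⟨k, r, h1, h2⟩ : ∃ k r : ℤ, x = 2*y*k + r ∧ r.natAbs < y.natAbs := by
      have h1 := Int.mul_ediv_add_emod x (2*y)
      have h2 := Int.emod_nonneg x (by omega : (2*y) ≠ 0)
      have h3 := Int.emod_lt_of_pos x (by omega : 0 < 2*y)
      have heven : ∃ m, 2*y*(x/(2*y)) = 2*m := ⟨y*(x/(2*y)), by ring⟩
      obtain ⟨m, hm⟩ := heven
      by_cases hr : x % (2*y) < y
      · exact ⟨x/(2*y), x % (2*y), by linear_combination h1.symm, by omega⟩
      · refine ⟨x/(2*y) + 1, x % (2*y) - 2*y, by linear_combination h1.symm, ?_⟩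
        omega
    exact ⟨k, r, h1, h2⟩

end helpers

section thetalaws

lemma th3_eq (τ : ℂ) : θ₃ τ = jacobiTheta₂ 0 τ := by
  refine tsum_congr fun n => ?_
  simp only [jacobiTheta₂_term]
  congr 1
  ring

lemma th2_eq (τ : ℂ) : θ₂ τ = cexp (↑π * I * τ / 4) * jacobiTheta₂ (τ/2) τ := by
  rw [jacobiTheta₂, ← tsum_mul_left]
  refine tsum_congr fun n => ?_
  simp only [jacobiTheta₂_term, ← Complex.exp_add]
  congr 1
  ring

lemma th3_periodic (τ : ℂ) (k : ℤ) : θ₃ (τ + 2*k) = θ₃ τ := by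
  rw [th3_eq, th3_eq, jt2_add_right_int]

lemma th4_periodic (τ : ℂ) (k : ℤ) : Th4 (τ + 2*k) = Th4 τ := by
  rw [Th4, Th4, jt2_add_right_int]

lemma th2_periodic (τ : ℂ) (k : ℤ) : θ₂ (τ + 2*k) = I ^ k * θ₂ τ := by
  rw [th2_eq, th2_eq, show (τ + 2*(k:ℂ))/2 = τ/2 + (k:ℤ) by push_cast; ring,
    jt2_add_left_int, jt2_add_right_int,
    show ↑π * I * (τ + 2*(k:ℂ)) / 4 = ↑π*I*τ/4 + ↑π*I*(k:ℂ)/2 by ring, Complex.exp_add,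
    exp_I_zpow]
  ring

lemma Sfac_ne_zero {τ : ℂ} (hτ : 0 < τ.im) : Sfac τ ≠ 0 := by
  have h1 : -I * τ ≠ 0 := by
    intro h
    apply_fun Complex.re at h
    simp [Complex.mul_re, Complex.I_re, Complex.I_im] at h
    exact hτ.ne' h
  simp only [Sfac, Ne, Complex.cpow_eq_zero_iff, not_and_or]
  tauto

lemma FE (z τ : ℂ) (hτ : 0 < τ.im) :
    jacobiTheta₂ (z/τ) (-1/τ) = Sfac τ * cexp (↑π * I * z^2 / τ) * jacobiTheta₂ z τ := by
  have hS := Sfac_ne_zero hτ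
  have hmul : cexp (↑π * I * z^2 / τ) * cexp (-↑π * I * z^2 / τ) = 1 := by
    rw [← Complex.exp_add, show ↑π*I*z^2/τ + -↑π*I*z^2/τ = 0 by ring, Complex.exp_zero]
  rw [jacobiTheta₂_functional_equation z τ,
    show Sfac τ * cexp (↑π * I * z^2 / τ) *
        (1 / (-I*τ) ^ (1/2:ℂ) * cexp (-↑π * I * z^2 / τ) * jacobiTheta₂ (z/τ) (-1/τ))
      = (Sfac τ * (1 / Sfac τ)) * (cexp (↑π * I * z^2 / τ) * cexp (-↑π * I * z^2 / τ))
          * jacobiTheta₂ (z/τ) (-1/τ) by rw [Sfac]; ring,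
    hmul, mul_one_div, div_self hS, one_mul, one_mul]

lemma th3_S {τ : ℂ} (hτ : 0 < τ.im) : θ₃ (-1/τ) = Sfac τ * θ₃ τ := by
  have h := FE 0 τ hτ
  rw [zero_div] at h
  rw [th3_eq, th3_eq, h]
  simp

lemma th4_S {τ : ℂ} (hτ : 0 < τ.im) : Th4 (-1/τ) = Sfac τ * θ₂ τ := by
  have h := FE (τ/2) τ hτ
  have hτ0 := tau_ne_zero hτ
  rw [show τ/2/τ = 1/2 by field_simp] at h
  rw [Th4, h, th2_eq, show (↑π * I * (τ/2)^2 / τ) = ↑π * I * τ / 4 by field_simp; ring]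
  ring

lemma th2_S {τ : ℂ} (hτ : 0 < τ.im) : θ₂ (-1/τ) = Sfac τ * Th4 τ := by
  have h := FE (1/2) τ hτ
  have hτ0 := tau_ne_zero hτ
  have h2 : cexp (↑π*I*(1/2)^2/τ) * θ₂ (-1/τ) = jacobiTheta₂ (1/2/τ) (-1/τ) := by
    rw [th2_eq, ← mul_assoc, ← Complex.exp_add,
      show (-1/τ)/2 = -(1/2/τ) by ring, jacobiTheta₂_neg_left,
      show ↑π*I*(1/2)^2/τ + ↑π*I*(-1/τ)/4 = 0 by field_simp; ring,
      Complex.exp_zero, one_mul]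
  have hE : cexp (↑π * I * (1/2)^2 / τ) ≠ 0 := Complex.exp_ne_zero _
  apply mul_left_cancel₀ hE
  rw [h2, h, Th4]
  ring

lemma theta_B (k : ℤ) (σ : ℂ) (hσ : 0 < σ.im) :
    ∃ v : ℂ, v ≠ 0 ∧ θ₂ (σ/(2*(k:ℂ)*σ+1)) = v * θ₂ σ ∧ θ₃ (σ/(2*(k:ℂ)*σ+1)) = v * θ₃ σ := by
  have hσ0 := tau_ne_zero hσ
  have hw : 0 < (-1/σ).im := neg_inv_im hσ
  have hwk : 0 < (-1/σ - 2*(k:ℂ)).im := by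
    rwa [Complex.sub_im, show (2*(k:ℂ)).im = 0 by simp, sub_zero]
  have hwk0 : -1/σ - 2*(k:ℂ) ≠ 0 := tau_ne_zero hwk
  have hden : 2*(k:ℂ)*σ + 1 ≠ 0 := by
    by_cases hk : k = 0
    · subst hk; norm_num
    · intro h
      apply_fun Complex.im at h
      simp [Complex.add_im, Complex.mul_im] at h
      rcases h with h | h
      · exact hk (by exact_mod_cast h)
      · exact hσ.ne' h
  have harg : σ/(2*(k:ℂ)*σ+1) = -1/(-1/σ - 2*(k:ℂ)) := by
    rw [div_eq_div_iff hden hwk0]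
    field_simp
    ring
  refine ⟨Sfac (-1/σ - 2*(k:ℂ)) * Sfac σ,
    mul_ne_zero (Sfac_ne_zero hwk) (Sfac_ne_zero hσ), ?_, ?_⟩
  · rw [harg, th2_S hwk, show -1/σ - 2*(k:ℂ) = -1/σ + 2*((-k : ℤ):ℂ) by push_cast; ring,
      th4_periodic, th4_S hσ]
    ring
  · rw [harg, th3_S hwk, show -1/σ - 2*(k:ℂ) = -1/σ + 2*((-k : ℤ):ℂ) by push_cast; ring,
      th3_periodic, th3_S hσ]
    ring

end thetalaws

/-- The invariance property for matrices (a, 2β; c, d). -/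
def Pm (a β c d : ℤ) (τ : ℂ) : Prop :=
  ∃ u : ℂ, u ≠ 0 ∧
    θ₂ (((a:ℂ)*τ + 2*(β:ℂ))/((c:ℂ)*τ + (d:ℂ))) = Complex.I^(β*d) * u * θ₂ τ ∧
    θ₃ (((a:ℂ)*τ + 2*(β:ℂ))/((c:ℂ)*τ + (d:ℂ))) = u * θ₃ τ

lemma d_odd {a β c d : ℤ} (hdet : a*d - 2*β*c = 1) : d % 2 = 1 := by
  have : Odd (a*d) := ⟨β*c, by linarith⟩
  have hd : Odd d := (Int.odd_mul.mp this).2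
  exact Int.odd_iff.mp hd

lemma closure_A (k : ℤ) {a β c d : ℤ} (hdet : a*d - 2*β*c = 1) {τ : ℂ} (hτ : 0 < τ.im)
    (h : Pm a β c d τ) : Pm (a + 2*k*c) (β + k*d) c d τ := by
  obtain ⟨u, hu, h2, h3⟩ := h
  have hcd0 : ¬(c = 0 ∧ d = 0) := by rintro ⟨rfl, rfl⟩; simp at hdet
  have hcd : (c:ℂ)*τ + (d:ℂ) ≠ 0 := denom_ne_zero hcd0 hτ
  have harg : ((a + 2*k*c : ℤ):ℂ)*τ + 2*((β + k*d : ℤ):ℂ) =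
      (((a:ℂ)*τ + 2*(β:ℂ)) + (2*(k:ℂ))*((c:ℂ)*τ + (d:ℂ))) := by push_cast; ring
  have hargdiv : (((a + 2*k*c : ℤ):ℂ)*τ + 2*((β + k*d : ℤ):ℂ))/((c:ℂ)*τ + (d:ℂ))
      = ((a:ℂ)*τ + 2*(β:ℂ))/((c:ℂ)*τ + (d:ℂ)) + 2*(k:ℂ) := by
    rw [harg, add_div, mul_div_assoc, div_self hcd, mul_one]
  have hIe : Complex.I^((β + k*d)*d) = Complex.I^k * Complex.I^(β*d) := by
    have hd : d % 2 = 1 := d_odd hdet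
    obtain ⟨m, hm⟩ : ∃ m, d = 2*m + 1 := ⟨d/2, by omega⟩
    rw [show (β + k*d)*d = k*(d*d-1) + k + β*d by ring,
      zpow_add₀ I_ne_zero, zpow_add₀ I_ne_zero,
      I_zpow_of_four_dvd ⟨k*(m*m+m), by rw [hm]; ring⟩, one_mul]
  refine ⟨u, hu, ?_, ?_⟩
  · rw [hargdiv, th2_periodic, h2, hIe]
    ring
  · rw [hargdiv, th3_periodic, h3]

lemma closure_B (k : ℤ) {a β c d : ℤ} (hdet : a*d - 2*β*c = 1) {τ : ℂ} (hτ : 0 < τ.im)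
    (h : Pm a β c d τ) : Pm a β (c + 2*k*a) (d + 4*k*β) τ := by
  obtain ⟨u, hu, h2, h3⟩ := h
  have hcd0 : ¬(c = 0 ∧ d = 0) := by rintro ⟨rfl, rfl⟩; simp at hdet
  have hcd : (c:ℂ)*τ + (d:ℂ) ≠ 0 := denom_ne_zero hcd0 hτ
  have hdet' : a*(d + 4*k*β) - 2*β*(c + 2*k*a) = 1 := by linear_combination hdet
  have hcd0' : ¬(c + 2*k*a = 0 ∧ d + 4*k*β = 0) := by
    rintro ⟨h1, h4⟩
    rw [show (c:ℤ) + 2*k*a = 0 from h1, show (d:ℤ) + 4*k*β = 0 from h4] at hdet'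
    simp at hdet'
  have hcd' : ((c + 2*k*a : ℤ):ℂ)*τ + ((d + 4*k*β : ℤ):ℂ) ≠ 0 := denom_ne_zero hcd0' hτ
  set g := ((a:ℂ)*τ + 2*(β:ℂ))/((c:ℂ)*τ + (d:ℂ)) with hg_def
  have hg : 0 < g.im := by
    have := mobius_pos (a := a) (b := 2*β) (c := c) (d := d) (by linarith) hτ
    rw [hg_def]
    convert this using 3
    push_cast; ring
  have hfac : 2*(k:ℂ)*g + 1 = (((c + 2*k*a : ℤ):ℂ)*τ + ((d + 4*k*β : ℤ):ℂ))/((c:ℂ)*τ + (d:ℂ)) := by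
    rw [hg_def, eq_div_iff hcd, add_mul, one_mul, mul_div_assoc', div_mul_cancel₀ _ hcd]
    push_cast
    ring
  have hden : 2*(k:ℂ)*g + 1 ≠ 0 := by
    rw [hfac]
    exact div_ne_zero hcd' hcd
  have harg : ((a:ℂ)*τ + 2*(β:ℂ))/(((c + 2*k*a : ℤ):ℂ)*τ + ((d + 4*k*β : ℤ):ℂ))
      = g/(2*(k:ℂ)*g + 1) := by
    rw [hfac, hg_def, div_div_div_cancel_right₀ hcd]
  obtain ⟨v, hv, hB2, hB3⟩ := theta_B k g hg
  have hIe : Complex.I^(β*(d + 4*k*β)) = Complex.I^(β*d) := by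
    rw [show β*(d + 4*k*β) = 4*(k*β*β) + β*d by ring, zpow_add₀ I_ne_zero,
      I_zpow_of_four_dvd ⟨k*β*β, rfl⟩, one_mul]
  exact ⟨v*u, mul_ne_zero hv hu, by rw [harg, hB2, h2, hIe]; ring, by rw [harg, hB3, h3]; ring⟩

lemma theta_main : ∀ N : ℕ, ∀ a β c d : ℤ, c.natAbs = N → a*d - 2*β*c = 1 → 2 ∣ c →
    ∀ τ : ℂ, 0 < τ.im → Pm a β c d τ := by
  intro N
  induction N using Nat.strong_induction_on with
  | _ N ih =>
    intro a β c d hN hdet hc τ hτ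
    by_cases hc0 : c = 0
    · subst hc0
      have had : a * d = 1 := by linarith
      rcases Int.mul_eq_one_iff_eq_one_or_neg_one.mp had with ⟨rfl, rfl⟩ | ⟨rfl, rfl⟩
      · have harg : (((1:ℤ):ℂ)*τ + 2*(β:ℂ))/(((0:ℤ):ℂ)*τ + ((1:ℤ):ℂ)) = τ + 2*(β:ℂ) := by
          push_cast; simp
        refine ⟨1, one_ne_zero, ?_, ?_⟩
        · rw [harg, th2_periodic τ β, mul_one, mul_one]
        · rw [harg, th3_periodic τ β, one_mul]
      · have harg : (((-1:ℤ):ℂ)*τ + 2*(β:ℂ))/(((0:ℤ):ℂ)*τ + ((-1:ℤ):ℂ)) = τ + 2*((-β:ℤ):ℂ) := by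
          push_cast
          rw [div_eq_iff (by norm_num : ((0:ℂ)*τ + -1) ≠ 0)]
          ring
        refine ⟨1, one_ne_zero, ?_, ?_⟩
        · rw [harg, th2_periodic τ (-β), show β * (-1:ℤ) = -β by ring, mul_one]
        · rw [harg, th3_periodic τ (-β), one_mul]
    · -- c ≠ 0
      have haodd : a % 2 = 1 := by
        have : Odd (a*d) := ⟨β*c, by linarith⟩
        exact Int.odd_iff.mp (Int.odd_mul.mp this).1
      have hce : c % 2 = 0 := by omega
      obtain ⟨k₁, r₁, ha, hr₁⟩ := div_step a c hc0 (by omega)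
      have ha'odd : r₁ % 2 = 1 := by
        obtain ⟨m, hm⟩ : ∃ m, 2*c*k₁ = 2*m := ⟨c*k₁, by ring⟩
        omega
      have ha'0 : r₁ ≠ 0 := by omega
      obtain ⟨k₂, r₂, hcEq, hr₂⟩ := div_step c r₁ ha'0 (by omega)
      have hr₂e : 2 ∣ r₂ := by
        obtain ⟨m, hm⟩ : ∃ m, 2*r₁*k₂ = 2*m := ⟨r₁*k₂, by ring⟩
        omega
      have hdet'' : r₁*(d - 4*k₂*(β - k₁*d)) - 2*(β - k₁*d)*r₂ = 1 := by
        linear_combination hdet - d*ha + 2*(β - k₁*d)*hcEq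
      have key := ih r₂.natAbs (by omega) r₁ (β - k₁*d) r₂ (d - 4*k₂*(β - k₁*d)) rfl hdet'' hr₂e τ hτ
      have step1 := closure_B k₂ hdet'' hτ key
      rw [show r₂ + 2*k₂*r₁ = c by linear_combination -hcEq,
        show d - 4*k₂*(β - k₁*d) + 4*k₂*(β - k₁*d) = d by ring] at step1
      have hdet' : r₁*d - 2*(β - k₁*d)*c = 1 := by linear_combination hdet - d*ha
      have step2 := closure_A k₁ hdet' hτ step1
      rw [show r₁ + 2*k₁*c = a by linear_combination -ha,
        show β - k₁*d + k₁*d = β by ring] at step2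
      exact step2


/-- x_n(τ) = 2θ₃(2^{n-1}τ)/θ₂(2^{n-1}τ). -/
noncomputable def xfun (n : ℕ) (τ : ℂ) : ℂ :=
  2 * θ₃ (2^(n-1) * τ) / θ₂ (2^(n-1) * τ)

/-- y_n(τ) = θ₂(8τ)/θ₂(2^{n-1}τ). -/
noncomputable def yfun (n : ℕ) (τ : ℂ) : ℂ :=
  θ₂ (8 * τ) / θ₂ (2^(n-1) * τ)

theorem x_modular (n : ℕ) (hn : 6 ≤ n) (hn2 : Even n)
    (a b c d : ℤ) (hdet : a * d - b * c = 1) (hc : (2 ^ n : ℤ) ∣ c)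
    (τ : ℂ) (hτ : 0 < τ.im) :
    xfun n (((a : ℂ) * τ + b) / ((c : ℂ) * τ + d)) = xfun n τ := by 
  obtain ⟨c₀, hc₀⟩ := hc
  set w : ℂ := 2^(n-1) * τ with hw_def
  have hw : 0 < w.im := by
    rw [hw_def, show ((2:ℂ)^(n-1)) = (((2^(n-1) : ℝ)):ℂ) by push_cast; ring,
      Complex.im_ofReal_mul]
    positivity
  have hnn : n - 2 + 2 = n := by omega
  have hpow : (2:ℤ)^n = 4 * 2^(n-2) := by
    conv_lhs => rw [← hnn]
    rw [pow_add]; ring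
  have hdet' : a*d - 2*(2^(n-2)*b)*(2*c₀) = 1 := by
    linear_combination hdet + b*hc₀ + b*c₀*hpow
  have hcd0 : ¬(c = 0 ∧ d = 0) := by rintro ⟨rfl, rfl⟩; simp at hdet
  have hden : (c:ℂ)*τ + (d:ℂ) ≠ 0 := denom_ne_zero hcd0 hτ
  have hcC : (c:ℂ) = 2^n * (c₀:ℂ) := by rw [hc₀]; push_cast; ring
  have hn1 : n - 1 + 1 = n := by omega
  have h2A : (2:ℂ)^n = 2 * (2:ℂ)^(n-1) := by
    conv_lhs => rw [← hn1]
    rw [pow_succ]; ring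
  have hn2' : n - 2 + 1 = n - 1 := by omega
  have h2B : (2:ℂ)^(n-1) = 2 * (2:ℂ)^(n-2) := by
    conv_lhs => rw [← hn2']
    rw [pow_succ]; ring
  have hdeq : ((2*c₀:ℤ):ℂ)*w + ((d:ℤ):ℂ) = (c:ℂ)*τ + (d:ℂ) := by
    push_cast
    rw [hw_def, hcC, h2A]
    ring
  have harg : (2:ℂ)^(n-1) * (((a:ℂ)*τ + b)/((c:ℂ)*τ + d))
      = (((a:ℤ):ℂ)*w + 2*((2^(n-2)*b : ℤ):ℂ))/(((2*c₀:ℤ):ℂ)*w + ((d:ℤ):ℂ)) := by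
    rw [hdeq, ← mul_div_assoc]
    congr 1
    rw [hw_def]
    push_cast
    rw [h2B]
    ring
  obtain ⟨u, hu, h2, h3⟩ := theta_main (2*c₀).natAbs a (2^(n-2)*b) (2*c₀) d rfl hdet'
    ⟨c₀, rfl⟩ w hw
  have hIone : Complex.I^((2^(n-2)*b : ℤ)*d) = 1 := by
    refine I_zpow_of_four_dvd ⟨2^(n-4)*b*d, ?_⟩
    have hn4 : n - 4 + 2 = n - 2 := by omega
    have : (2:ℤ)^(n-2) = 4*2^(n-4) := by
      conv_lhs => rw [← hn4]
      rw [pow_add]; ring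
    rw [this]; ring
  rw [hIone, one_mul] at h2
  show 2 * θ₃ (2^(n-1) * (((a:ℂ)*τ + b)/((c:ℂ)*τ + d))) / θ₂ (2^(n-1) * (((a:ℂ)*τ + b)/((c:ℂ)*τ + d)))
    = 2 * θ₃ (2^(n-1) * τ) / θ₂ (2^(n-1) * τ)
  rw [harg, h2, h3, ← hw_def]
  rw [show 2 * (u * θ₃ w) = u * (2 * θ₃ w) by ring]
  exact mul_div_mul_left _ _ hu
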